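/- Hasse derivatives of products of additive polynomials (the formula used to prove that tame series are stable under divided derivatives): let s ≥ 1 and, for 1 ≤ k ≤ s, let f_k = Σ_{j≥0} c_{k,j}·X^{q^j} ∈ R[X] be a polynomial supported on q-power exponents (only finitely many coefficients c_{k,j} ∈ R are nonzero). Then for every n ≥ 1: D_n(f₁⋯f_s) = Σ ∏_{k=1}^{s} g_k, where the sum runs over all s-tuples (i₁,…,i_s) with each i_k ∈ {0} ∪ {q^j : j ≥ 0} and i₁+⋯+i_s = n, and where g_k = f_k if i_k = 0, while g_k is the constant polynomial c_{k,j} if i_k = q^j. -/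

import Mathlib

open Polynomial Finset

-- flattening lemma for antidiagonalTuple succ
lemma sum_adt_succ {M : Type*} [AddCommMonoid M] (s n : ℕ) (g : (Fin (s+1) → ℕ) → M) :
    ∑ t ∈ Finset.Nat.antidiagonalTuple (s+1) n, g t =
      ∑ ij ∈ Finset.HasAntidiagonal.antidiagonal n, ∑ t ∈ Finset.Nat.antidiagonalTuple s ij.2,
        g (Fin.cons ij.1 t) := by
  rw [Finset.sum_sigma']
  refine Finset.sum_nbij' (fun t => ⟨(t 0, ∑ i, t (Fin.succ i)), Fin.tail t⟩)
    (fun x => Fin.cons x.1.1 x.2) ?_ ?_ ?_ ?_ ?_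
  · intro t ht
    rw [Finset.Nat.mem_antidiagonalTuple] at ht
    simp only [Finset.mem_sigma, Finset.HasAntidiagonal.mem_antidiagonal, Finset.Nat.mem_antidiagonalTuple]
    constructor
    · rw [← ht, Fin.sum_univ_succ]
    · rfl
  · intro x hx
    rw [Finset.mem_sigma, Finset.HasAntidiagonal.mem_antidiagonal, Finset.Nat.mem_antidiagonalTuple] at hx
    rw [Finset.Nat.mem_antidiagonalTuple, Fin.sum_univ_succ]
    simp [hx.2, hx.1]
  · intro t ht
    exact Fin.cons_self_tail t
  · intro x hx
    rw [Finset.mem_sigma, Finset.HasAntidiagonal.mem_antidiagonal, Finset.Nat.mem_antidiagonalTuple] at hx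
    ext <;> simp [Fin.tail_cons, hx.2]
  · intro t ht
    rw [Fin.cons_self_tail]

lemma hasseDeriv_prod {R : Type*} [CommRing R] (s : ℕ) (f : Fin s → Polynomial R) (n : ℕ) :
    Polynomial.hasseDeriv n (∏ k, f k) =
      ∑ t ∈ Finset.Nat.antidiagonalTuple s n, ∏ k, Polynomial.hasseDeriv (t k) (f k) := by
  induction s generalizing n with
  | zero =>
    simp only [Finset.univ_eq_empty, Finset.prod_empty]
    cases n with
    | zero => simp
    | succ m =>
      rw [Finset.Nat.antidiagonalTuple_zero_succ, Finset.sum_empty, ← Polynomial.C_1,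
        Polynomial.hasseDeriv_C _ _ m.succ_pos]
  | succ s ih =>
    rw [Fin.prod_univ_succ, Polynomial.hasseDeriv_mul, sum_adt_succ]
    refine Finset.sum_congr rfl fun ij hij => ?_
    rw [ih, Finset.mul_sum]
    refine Finset.sum_congr rfl fun t ht => ?_
    rw [Fin.prod_univ_succ]
    simp [Fin.cons_succ]

open scoped Classical in
lemma key_hasseDeriv {R : Type*} [CommRing R] (p q e : ℕ) [CharP R p] (hp : p.Prime)
    (he : 0 < e) (hq : q = p ^ e) (f : Polynomial R)
    (hf : ∀ N, f.coeff N ≠ 0 → ∃ j, N = q ^ j) (n : ℕ) (hn : 1 ≤ n) :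
    Polynomial.hasseDeriv n f =
      if ∃ j, n = q ^ j then Polynomial.C (f.coeff n) else 0 := by
  ext m
  rw [Polynomial.hasseDeriv_coeff]
  by_cases hc : f.coeff (m + n) = 0
  · rw [hc, mul_zero]
    split_ifs with h
    · rw [Polynomial.coeff_C]
      split_ifs with hm
      · subst hm; rw [zero_add] at hc; rw [hc]
      · rfl
    · simp
  · obtain ⟨j, hj⟩ := hf _ hc
    rw [hq, ← pow_mul] at hj
    by_cases hne : n = p ^ (e * j)
    · have hm0 : m = 0 := by omega
      subst hm0
      rw [zero_add] at hj ⊢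
      rw [Nat.choose_self, Nat.cast_one, one_mul]
      have hex : ∃ j', n = q ^ j' := ⟨j, by rw [hq, ← pow_mul, hj]⟩
      rw [if_pos hex, Polynomial.coeff_C, if_pos rfl]
    · have hdvd : p ∣ (m + n).choose n := by
        rw [hj]
        exact Nat.Prime.dvd_choose_pow hp (by omega) hne
      have hz : ((m + n).choose n : R) = 0 := (CharP.cast_eq_zero_iff R p _).mpr hdvd
      rw [hz, zero_mul]
      split_ifs with h
      · rw [Polynomial.coeff_C]
        split_ifs with hm
        · exfalso
          subst hm
          rw [zero_add] at hj
          exact hne hj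
        · rfl
      · simp

/-- Hasse derivatives of products of polynomials supported on `q`-power exponents:
if each `f_k` has all its nonzero coefficients in degrees which are powers of `q`
(i.e. `f_k = ∑_j c_{k,j} X^{q^j}` with `c_{k,j} = coeff (f_k) (q^j)`), then for `n ≥ 1`,
`D_n(f₁⋯f_s)` is the sum, over all tuples `(t₁,…,t_s)` with each `t_k ∈ {0} ∪ {q^j : j ≥ 0}`
and `t₁+⋯+t_s = n`, of the products `∏_k g_k` where `g_k = f_k` if `t_k = 0` and `g_k` is
the constant polynomial `c_{k,j}` if `t_k = q^j`. -/
theorem stmt_17 {R : Type*} [CommRing R] (p q e : ℕ) [CharP R p] (hp : p.Prime)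
    (he : 0 < e) (hq : q = p ^ e)
    (s : ℕ) (hs : 1 ≤ s) (f : Fin s → Polynomial R)
    (hf : ∀ (k : Fin s) (N : ℕ), (f k).coeff N ≠ 0 → ∃ j : ℕ, N = q ^ j)
    (n : ℕ) (hn : 1 ≤ n) :
    Polynomial.hasseDeriv n (∏ k, f k) =
      ∑ᶠ t ∈ {t : Fin s → ℕ |
          (∀ k, t k = 0 ∨ ∃ j : ℕ, t k = q ^ j) ∧ (∑ k, t k) = n},
        ∏ k, if t k = 0 then f k else Polynomial.C ((f k).coeff (t k)) := by
  classical
  set F : Finset (Fin s → ℕ) :=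
    (Finset.Nat.antidiagonalTuple s n).filter (fun t => ∀ k, t k = 0 ∨ ∃ j : ℕ, t k = q ^ j)
    with hF
  have hset : {t : Fin s → ℕ |
      (∀ k, t k = 0 ∨ ∃ j : ℕ, t k = q ^ j) ∧ (∑ k, t k) = n} = ↑F := by
    ext t
    simp only [Set.mem_setOf_eq, hF, Finset.coe_filter, Finset.Nat.mem_antidiagonalTuple]
    tauto
  rw [hset, finsum_mem_coe_finset, hasseDeriv_prod]
  have hsub : F ⊆ Finset.Nat.antidiagonalTuple s n := Finset.filter_subset _ _
  have hzero : ∀ t ∈ Finset.Nat.antidiagonalTuple s n, t ∉ F →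
      ∏ k, Polynomial.hasseDeriv (t k) (f k) = 0 := by
    intro t ht htF
    rw [hF, Finset.mem_filter, not_and] at htF
    have := htF ht
    push_neg at this
    obtain ⟨k, hk0, hkj⟩ := this
    refine Finset.prod_eq_zero (Finset.mem_univ k) ?_
    rw [key_hasseDeriv p q e hp he hq (f k) (hf k) (t k) (by omega), if_neg (not_exists.mpr hkj)]
  rw [← Finset.sum_subset hsub hzero]
  refine Finset.sum_congr rfl fun t ht => Finset.prod_congr rfl fun k _ => ?_
  rw [hF, Finset.mem_filter] at ht
  rcases ht.2 k with h0 | ⟨j, hj⟩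
  · rw [h0, if_pos rfl]
    exact Polynomial.hasseDeriv_zero' (f k)
  · have hne : t k ≠ 0 := by
      rw [hj]
      exact pow_ne_zero j (by rw [hq]; exact (Nat.pow_pos (n := e) hp.pos).ne')
    rw [if_neg hne, key_hasseDeriv p q e hp he hq (f k) (hf k) (t k) (by omega),
      if_pos ⟨j, hj⟩]
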